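/- arXiv:2104.01841 — 7 statements merged into one kernel-verified Lean document; each statement's English description precedes it below -/
import Mathlib

section
/- Let H, G₁, G₂ be finite simple graphs and let h₁ : H → G₁ and h₂ : H → G₂ be injective graph homomorphisms. Then in the category of finite simple graphs and (all) graph homomorphisms, the span G₁ ←h₁— H —h₂→ G₂ has a pushout; it is given by the H-sum G₁ #_H G₂ (the graph obtained from the disjoint union of G₁ and G₂ by identifying h₁(v) with h₂(v) for every vertex v of H) together with the evident inclusion homomorphisms G₁ → G₁ #_H G₂ and G₂ → G₁ #_H G₂. -/
open CategoryTheory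

/-- A finite simple graph: a finite vertex type together with a simple graph on it. -/
structure FinGraph : Type 1 where
  V : Type
  [fin : Finite V]
  G : SimpleGraph V

attribute [instance] FinGraph.fin

namespace Glue

variable {S A B : FinGraph} (g : S.G →g A.G) (h : S.G →g B.G)

/-- The identification relation of the `S`-sum: `inl (g s)` is glued to `inr (h s)`. -/
def rel : (A.V ⊕ B.V) → (A.V ⊕ B.V) → Prop :=
  fun x y => ∃ s : S.V, x = Sum.inl (g s) ∧ y = Sum.inr (h s)

/-- Vertices of the `S`-sum: the disjoint union with `g s` and `h s` identified. -/
def GV := Quot (rel g h)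

instance : Finite (GV g h) :=
  Finite.of_surjective (Quot.mk (rel g h)) fun q => Quot.inductionOn q fun x => ⟨x, rfl⟩

/-- Left injection on vertices. -/
def mkl (a : A.V) : GV g h := Quot.mk _ (Sum.inl a)

/-- Right injection on vertices. -/
def mkr (b : B.V) : GV g h := Quot.mk _ (Sum.inr b)

/-- Adjacency in the `S`-sum: edges coming from `A` or from `B` (with loops and
parallel edges removed by the quotient and the `x ≠ y` condition). -/
def adj (x y : GV g h) : Prop :=
  x ≠ y ∧ ((∃ a b, A.G.Adj a b ∧ x = mkl g h a ∧ y = mkl g h b) ∨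
           (∃ a b, B.G.Adj a b ∧ x = mkr g h a ∧ y = mkr g h b))

/-- The `S`-sum graph `A #_S B`. -/
def graph : SimpleGraph (GV g h) where
  Adj := adj g h
  symm := by
    constructor
    rintro x y ⟨hne, hc⟩
    refine ⟨hne.symm, ?_⟩
    rcases hc with ⟨a, b, hab, hx, hy⟩ | ⟨a, b, hab, hx, hy⟩
    · exact Or.inl ⟨b, a, hab.symm, hy, hx⟩
    · exact Or.inr ⟨b, a, hab.symm, hy, hx⟩
  loopless := ⟨fun x hx => hx.1 rfl⟩

/-- The `S`-sum as a finite graph. -/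
def obj : FinGraph := ⟨GV g h, graph g h⟩

open Classical in
/-- Normal form for vertices of the disjoint union modulo gluing. -/
noncomputable def norm : A.V ⊕ B.V → A.V ⊕ B.V
  | .inl a => .inl a
  | .inr b => if hb : ∃ s, h s = b then .inl (g (Classical.choose hb)) else .inr b

lemma norm_rel (hh : Function.Injective h) {x y : A.V ⊕ B.V} (hxy : rel g h x y) :
    norm g h x = norm g h y := by
  obtain ⟨s, rfl, rfl⟩ := hxy
  have hb : ∃ t : S.V, h t = h s := ⟨s, rfl⟩
  have hc : Classical.choose hb = s := hh (Classical.choose_spec hb)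
  simp only [norm, dif_pos hb, hc]

lemma norm_eqvGen (hh : Function.Injective h) {x y : A.V ⊕ B.V}
    (hxy : Relation.EqvGen (rel g h) x y) : norm g h x = norm g h y := by
  induction hxy with
  | rel _ _ hr => exact norm_rel g h hh hr
  | refl => rfl
  | symm _ _ _ ih => exact ih.symm
  | trans _ _ _ _ _ ih₁ ih₂ => exact ih₁.trans ih₂

lemma mkl_inj (hh : Function.Injective h) : Function.Injective (mkl g h) := by
  intro a a' e
  have := norm_eqvGen g h hh (Quot.eq.1 e)
  simpa [norm] using this

lemma mkr_inj (hg : Function.Injective g) (hh : Function.Injective h) :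
    Function.Injective (mkr g h) := by
  intro b b' e
  have hn := norm_eqvGen g h hh (Quot.eq.1 e)
  by_cases hb : ∃ s, h s = b <;> by_cases hb' : ∃ s, h s = b'
  · simp only [norm, dif_pos hb, dif_pos hb'] at hn
    have : Classical.choose hb = Classical.choose hb' := hg (Sum.inl.inj hn)
    rw [← Classical.choose_spec hb, ← Classical.choose_spec hb', this]
  · simp only [norm, dif_pos hb, dif_neg hb'] at hn
    exact absurd hn (by simp)
  · simp only [norm, dif_neg hb, dif_pos hb'] at hn
    exact absurd hn (by simp)
  · simp only [norm, dif_neg hb, dif_neg hb'] at hn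
    exact Sum.inr.inj hn

/-- The inclusion homomorphism `A → A #_S B`. -/
def inlHom (hg : Function.Injective g) (hh : Function.Injective h) :
    A.G →g (obj g h).G where
  toFun := mkl g h
  map_rel' := fun {a b} hab =>
    show adj g h (mkl g h a) (mkl g h b) from
    ⟨fun e => hab.ne (mkl_inj g h hh e), Or.inl ⟨a, b, hab, rfl, rfl⟩⟩

/-- The inclusion homomorphism `B → A #_S B`. -/
def inrHom (hg : Function.Injective g) (hh : Function.Injective h) :
    B.G →g (obj g h).G where
  toFun := mkr g h
  map_rel' := fun {a b} hab =>
    show adj g h (mkr g h a) (mkr g h b) from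
    ⟨fun e => hab.ne (mkr_inj g h hg hh e), Or.inr ⟨a, b, hab, rfl, rfl⟩⟩

lemma inlHom_inj (hg : Function.Injective g) (hh : Function.Injective h) :
    Function.Injective (inlHom g h hg hh) := mkl_inj g h hh

lemma inrHom_inj (hg : Function.Injective g) (hh : Function.Injective h) :
    Function.Injective (inrHom g h hg hh) := mkr_inj g h hg hh

end Glue

/-- The complete graph `K n` on vertex set `Fin n`. -/
abbrev KG (n : ℕ) : FinGraph := ⟨Fin n, (⊤ : SimpleGraph (Fin n))⟩

/-- `Graph_homo`: the category of finite simple graphs and (all) graph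
homomorphisms. -/
instance : Category.{0, 1} FinGraph where
  Hom A B := A.G →g B.G
  id A := SimpleGraph.Hom.id
  comp f g := g.comp f

/-- The underlying vertex map of a morphism of `Graph_homo`. -/
abbrev homFun {A B : FinGraph} (f : A ⟶ B) : A.V → B.V := (f : A.G →g B.G).toFun

/-- for injective graph homomorphisms `h₁ : H → G₁` and `h₂ : H → G₂`,
the span `G₁ ← H → G₂` has a pushout in the category of finite simple graphs and all
graph homomorphisms, namely the `H`-sum `G₁ #_H G₂` (disjoint union with `h₁ v`
identified with `h₂ v` for each vertex `v` of `H`) with its evident inclusions: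
the square commutes and every commuting cocone factors uniquely through it. -/
theorem Hsum_is_pushout (H G₁ G₂ : FinGraph) (h₁ : H ⟶ G₁) (h₂ : H ⟶ G₂)
    (inj₁ : Function.Injective (homFun h₁))
    (inj₂ : Function.Injective (homFun h₂)) :
    h₁ ≫ (Glue.inlHom h₁ h₂ inj₁ inj₂ : G₁ ⟶ Glue.obj h₁ h₂) =
      h₂ ≫ (Glue.inrHom h₁ h₂ inj₁ inj₂ : G₂ ⟶ Glue.obj h₁ h₂) ∧
    ∀ (Z : FinGraph) (z₁ : G₁ ⟶ Z) (z₂ : G₂ ⟶ Z), h₁ ≫ z₁ = h₂ ≫ z₂ →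
      ∃! m : Glue.obj h₁ h₂ ⟶ Z,
        (Glue.inlHom h₁ h₂ inj₁ inj₂ : G₁ ⟶ Glue.obj h₁ h₂) ≫ m = z₁ ∧
        (Glue.inrHom h₁ h₂ inj₁ inj₂ : G₂ ⟶ Glue.obj h₁ h₂) ≫ m = z₂ := by
  
  constructor
  · show (Glue.inlHom h₁ h₂ inj₁ inj₂).comp h₁ = (Glue.inrHom h₁ h₂ inj₁ inj₂).comp h₂
    ext s
    exact Quot.sound ⟨s, rfl, rfl⟩
  · intro Z z₁ z₂ hcomm
    let f₁ : G₁.G →g Z.G := z₁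
    let f₂ : G₂.G →g Z.G := z₂
    have hfun : ∀ s : H.V,
        f₁ (homFun h₁ s) =
        f₂ (homFun h₂ s) := fun s =>
      congrArg (fun (f : H.G →g Z.G) => f s) hcomm
    have hsound : ∀ x y, Glue.rel h₁ h₂ x y →
        Sum.elim f₁ f₂ x =
        Sum.elim f₁ f₂ y := by
      rintro x y ⟨s, rfl, rfl⟩
      exact hfun s
    refine ⟨⟨Quot.lift _ hsound, ?_⟩, ⟨rfl, rfl⟩, ?_⟩
    · rintro x y (⟨hne, ⟨a, b, hab, rfl, rfl⟩ | ⟨a, b, hab, rfl, rfl⟩⟩ : Glue.adj h₁ h₂ x y)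
      · exact f₁.map_rel' hab
      · exact f₂.map_rel' hab
    · rintro m ⟨hm₁, hm₂⟩
      refine DFunLike.ext (F := (Glue.obj h₁ h₂).G →g Z.G) m _ fun x => ?_
      induction x using Quot.ind with
      | _ x =>
        cases x with
        | inl a => exact congrArg (fun (f : G₁.G →g Z.G) => f a) hm₁
        | inr b => exact congrArg (fun (f : G₂.G →g Z.G) => f b) hm₂
end

section
/- Let ℕ_div be the poset of positive natural numbers ordered by divisibility, viewed as a category; let Ω_0 = 1, Ω_1 = 2, and Ω_n = ∏_{p prime, p ≤ n} p^n for n ≥ 2; and let the proxy pushout of a span a ← Ω_n → b (where Ω_n divides both a and b) be lcm(a, b) with its two divisibility morphisms. Then (ℕ_div, Ω, lcm) is a spined category, and the map sending each positive integer m to the largest exponent occurring in its prime factorization (with 1 ↦ 0) is an S-functor over it. In particular (ℕ_div, Ω, lcm) is measurable. -/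
open CategoryTheory

universe u v

/-- The data of a spine and proxy pushout operation on a category. -/
structure SpineData (C : Type u) [Category.{v} C] where
  /-- the spine, a functor from the discrete category ℕ -/
  Ω : ℕ → C
  /-- proxy pushout object of a span out of a spine object -/
  P : ∀ {n : ℕ} {G H : C}, (Ω n ⟶ G) → (Ω n ⟶ H) → C
  /-- left structure morphism of the proxy pushout cocone -/
  inl : ∀ {n : ℕ} {G H : C} (g : Ω n ⟶ G) (h : Ω n ⟶ H), G ⟶ P g h
  /-- right structure morphism of the proxy pushout cocone -/
  inr : ∀ {n : ℕ} {G H : C} (g : Ω n ⟶ G) (h : Ω n ⟶ H), H ⟶ P g h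

variable {C : Type u} [Category.{v} C]

/-- (SC1): every object admits a morphism to some spine object. -/
def SpineData.SC1 (D : SpineData C) : Prop :=
  ∀ X : C, ∃ n : ℕ, Nonempty (X ⟶ D.Ω n)

/-- (SC2): unique compatibility morphisms between proxy pushouts of extended spans. -/
def SpineData.SC2 (D : SpineData C) : Prop :=
  ∀ {n : ℕ} {G H G' H' : C} (g : D.Ω n ⟶ G) (h : D.Ω n ⟶ H) (g' : G ⟶ G') (h' : H ⟶ H'),
    ∃! m : D.P g h ⟶ D.P (g ≫ g') (h ≫ h'),
      D.inl g h ≫ m = g' ≫ D.inl (g ≫ g') (h ≫ h') ∧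
      D.inr g h ≫ m = h' ≫ D.inr (g ≫ g') (h ≫ h')

/-- A spined category is a category equipped with spine data satisfying SC1 and SC2. -/
def SpineData.IsSpined (D : SpineData C) : Prop := D.SC1 ∧ D.SC2

/-- An S-functor over a spined category `(C, Ω, 𝔓)`: a spinal functor to the spined
category `Nat` (the poset `(ℕ, ≤)` with spine `n ↦ n` and proxy pushouts given by maxima).
Equivalently: a monotone map preserving the spine and proxy pushouts. -/
structure SFunctor (D : SpineData C) where
  val : C → ℕ
  mono : ∀ {X Y : C}, (X ⟶ Y) → val X ≤ val Y
  spine : ∀ n : ℕ, val (D.Ω n) = n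
  pp : ∀ {n : ℕ} {G H : C} (g : D.Ω n ⟶ G) (h : D.Ω n ⟶ H),
    val (D.P g h) = max (val G) (val H)

/-- An object is pseudo-chordal if all S-functors agree on it. -/
def PseudoChordal (D : SpineData C) (X : C) : Prop :=
  ∀ F G : SFunctor D, F.val X = G.val X

/-- The chordal objects: the smallest collection of objects containing the spine and
closed under proxy pushouts. -/
inductive Chordal (D : SpineData C) : C → Prop
  | spine (n : ℕ) : Chordal D (D.Ω n)
  | push {n : ℕ} {A B : C} (a : D.Ω n ⟶ A) (b : D.Ω n ⟶ B) :
      Chordal D A → Chordal D B → Chordal D (D.P a b)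

/-- The set of widths of pseudo-chordal completions of `X`: `k` is such a width
iff there is a morphism `X ⟶ H` with `H` pseudo-chordal and every S-functor takes
the value `k` on `H`. -/
def pcWidths (D : SpineData C) (X : C) : Set ℕ :=
  {k | ∃ H : C, Nonempty (X ⟶ H) ∧ PseudoChordal D H ∧ ∀ F : SFunctor D, F.val H = k}

/-- The set of widths of chordal completions of `X`. -/
def chWidths (D : SpineData C) (X : C) : Set ℕ :=
  {k | ∃ H : C, Nonempty (X ⟶ H) ∧ Chordal D H ∧ ∀ F : SFunctor D, F.val H = k}

/-- The triangulation number: minimum width of a pseudo-chordal completion. -/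
noncomputable def tri (D : SpineData C) (X : C) : ℕ := sInf (pcWidths D X)

/-- The chordal triangulation number: minimum width of a chordal completion. -/
noncomputable def triCh (D : SpineData C) (X : C) : ℕ := sInf (chWidths D X)

/-- The order of an object: least `n` admitting a morphism `X ⟶ Ω n`. -/
noncomputable def ordOf (D : SpineData C) (X : C) : ℕ := sInf {n : ℕ | Nonempty (X ⟶ D.Ω n)}

/-- The positive natural numbers. -/
def PNatDiv : Type := {n : ℕ // 0 < n}

/-- The divisibility partial order on the positive natural numbers; `ℕ_div` is this
poset viewed as a category. -/
instance : PartialOrder PNatDiv where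
  le a b := a.1 ∣ b.1
  le_refl a := dvd_refl a.1
  le_trans a b c hab hbc := dvd_trans hab hbc
  le_antisymm a b hab hba := Subtype.ext (Nat.dvd_antisymm hab hba)

/-- The underlying natural number of the spine: `Ω 0 = 1`, `Ω 1 = 2`, and
`Ω n = ∏_{p prime, p ≤ n} p ^ n` for `n ≥ 2`. -/
def omegaDivNat : ℕ → ℕ
  | 0 => 1
  | 1 => 2
  | (n + 2) => ∏ p ∈ (Finset.range (n + 3)).filter Nat.Prime, p ^ (n + 2)

lemma omegaDivNat_pos : ∀ n : ℕ, 0 < omegaDivNat n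
  | 0 => one_pos
  | 1 => two_pos
  | (n + 2) => Finset.prod_pos fun p hp =>
      pow_pos ((Finset.mem_filter.1 hp).2.pos) _

/-- The spine data of `ℕ_div`: spine `omegaDivNat` and proxy pushouts given by least
common multiples. -/
def DivSpine : SpineData PNatDiv where
  Ω n := ⟨omegaDivNat n, omegaDivNat_pos n⟩
  P {_ a b} _ _ := ⟨Nat.lcm a.1 b.1, Nat.lcm_pos a.2 b.2⟩
  inl {_ a b} _ _ := homOfLE (show a.1 ∣ Nat.lcm a.1 b.1 from Nat.dvd_lcm_left _ _)
  inr {_ a b} _ _ := homOfLE (show b.1 ∣ Nat.lcm a.1 b.1 from Nat.dvd_lcm_right _ _)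

/-- The largest exponent occurring in the prime factorization of `m` (`0` for `m = 1`). -/
def maxExp (m : ℕ) : ℕ := m.factorization.support.sup m.factorization

lemma factorization_le_maxExp (m p : ℕ) : m.factorization p ≤ maxExp m := by
  by_cases h : p ∈ m.factorization.support
  · exact Finset.le_sup h
  · simp [Finsupp.notMem_support_iff.mp h]

lemma maxExp_mono {a b : ℕ} (ha : a ≠ 0) (hb : b ≠ 0) (h : a ∣ b) : maxExp a ≤ maxExp b := by
  refine Finset.sup_le fun p _ => ?_
  calc a.factorization p ≤ b.factorization p :=
        Finsupp.le_def.mp ((Nat.factorization_le_iff_dvd ha hb).2 h) p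
    _ ≤ maxExp b := factorization_le_maxExp b p

lemma maxExp_lcm {a b : ℕ} (ha : a ≠ 0) (hb : b ≠ 0) :
    maxExp (Nat.lcm a b) = max (maxExp a) (maxExp b) := by
  have hl : Nat.lcm a b ≠ 0 := Nat.lcm_ne_zero ha hb
  apply le_antisymm
  · refine Finset.sup_le fun p _ => ?_
    rw [Nat.factorization_lcm ha hb, Finsupp.sup_apply]
    exact sup_le_sup (factorization_le_maxExp a p) (factorization_le_maxExp b p)
  · exact max_le (maxExp_mono ha hl (Nat.dvd_lcm_left _ _))
      (maxExp_mono hb hl (Nat.dvd_lcm_right _ _))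

lemma maxExp_omega (n : ℕ) : maxExp (omegaDivNat n) = n := by
  match n with
  | 0 => simp [maxExp, omegaDivNat]
  | 1 =>
    show maxExp 2 = 1
    rw [maxExp, Nat.Prime.factorization Nat.prime_two]
    rw [Finsupp.support_single_ne_zero _ one_ne_zero, Finset.sup_singleton,
      Finsupp.single_eq_same]
  | (n + 2) =>
    set S := (Finset.range (n + 3)).filter Nat.Prime with hS
    have h2S : 2 ∈ S :=
      Finset.mem_filter.2 ⟨Finset.mem_range.2 (by omega), Nat.prime_two⟩
    have hfact : (omegaDivNat (n + 2)).factorization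
        = ∑ p ∈ S, Finsupp.single p (n + 2) := by
      rw [omegaDivNat, Nat.factorization_prod
        (fun p hp => (pow_pos (Finset.mem_filter.1 hp).2.pos _).ne')]
      exact Finset.sum_congr rfl fun p hp => (Finset.mem_filter.1 hp).2.factorization_pow
    have happ : ∀ q, (omegaDivNat (n + 2)).factorization q
        = if q ∈ S then n + 2 else 0 := by
      intro q
      rw [hfact, Finsupp.finset_sum_apply]
      rw [Finset.sum_congr rfl fun p (_ : p ∈ S) => Finsupp.single_apply]
      exact Finset.sum_ite_eq' S q fun _ => n + 2
    apply le_antisymm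
    · refine Finset.sup_le fun q _ => ?_
      rw [happ]
      split <;> omega
    · have hmem : 2 ∈ (omegaDivNat (n + 2)).factorization.support := by
        rw [Finsupp.mem_support_iff, happ]
        simp [h2S]
      have := Finset.le_sup (f := (omegaDivNat (n + 2)).factorization) hmem
      rwa [happ, if_pos h2S] at this

/-- `(ℕ_div, Ω, lcm)` is a spined category, and the map sending each
positive integer to the largest exponent occurring in its prime factorization is an
S-functor over it; in particular `(ℕ_div, Ω, lcm)` is measurable. -/
theorem divSpine_isSpined_and_maxExp_SFunctor :
    DivSpine.IsSpined ∧ ∃ F : SFunctor DivSpine, ∀ x : PNatDiv, F.val x = maxExp x.1 := by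
  constructor
  · constructor
    · -- SC1
      intro X
      refine ⟨X.1 + 2, ⟨homOfLE ?_⟩⟩
      show X.1 ∣ omegaDivNat (X.1 + 2)
      have hx : X.1 ≠ 0 := X.2.ne'
      have h1 : X.1 = ∏ p ∈ X.1.factorization.support, p ^ X.1.factorization p :=
        (Nat.factorization_prod_pow_eq_self hx).symm
      rw [omegaDivNat]
      conv_lhs => rw [h1]
      calc ∏ p ∈ X.1.factorization.support, p ^ X.1.factorization p
          ∣ ∏ p ∈ X.1.factorization.support, p ^ (X.1 + 2) :=
            Finset.prod_dvd_prod_of_dvd _ _ fun p _ =>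
              pow_dvd_pow p (le_of_lt (lt_of_lt_of_le (Nat.factorization_lt p hx) (by omega)))
        _ ∣ ∏ p ∈ (Finset.range (X.1 + 3)).filter Nat.Prime, p ^ (X.1 + 2) := by
            refine Finset.prod_dvd_prod_of_subset _ _ _ fun p hp => ?_
            rw [Nat.support_factorization, Nat.mem_primeFactors] at hp
            refine Finset.mem_filter.2 ⟨Finset.mem_range.2 ?_, hp.1⟩
            have := Nat.le_of_dvd X.2 hp.2.1
            omega
    · -- SC2
      intro n G H G' H' g h g' h'
      refine ⟨homOfLE ?_, ⟨Subsingleton.elim _ _, Subsingleton.elim _ _⟩,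
        fun y _ => Subsingleton.elim _ _⟩
      show Nat.lcm G.1 H.1 ∣ Nat.lcm G'.1 H'.1
      have hg : G.1 ∣ G'.1 := leOfHom g'
      have hh : H.1 ∣ H'.1 := leOfHom h'
      exact Nat.lcm_dvd (hg.trans (Nat.dvd_lcm_left _ _))
        (hh.trans (Nat.dvd_lcm_right _ _))
  · refine ⟨⟨fun x => maxExp x.1, ?_, ?_, ?_⟩, fun x => rfl⟩
    · intro X Y f
      exact maxExp_mono X.2.ne' Y.2.ne' (leOfHom f)
    · intro n
      exact maxExp_omega n
    · intro n G H g h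
      exact maxExp_lcm G.2.ne' H.2.ne'
end

section
/- In the spined category (ℕ_div, Ω, lcm) of positive natural numbers under divisibility with spine Ω_0 = 1, Ω_1 = 2, Ω_n = ∏_{p prime, p ≤ n} p^n for n ≥ 2 and proxy pushouts given by lcm, the generalized clique number ω (where ω(x) is the largest n such that Ω_n divides x) is not an S-functor. Concretely, ω fails to preserve proxy pushouts: Ω_0 = 1 divides both 16 and 81, yet ω(lcm(16, 81)) = ω(1296) = 4 while max(ω(16), ω(81)) = 2. -/
open CategoryTheory

universe u v

variable {C : Type u} [Category.{v} C]

/-- The generalized clique number on `ℕ_div`: the largest `n` such that there is a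
morphism `Ω n ⟶ x`, i.e. such that `Ω n` divides `x`. -/
noncomputable def gcn (x : PNatDiv) : ℕ := sSup {n : ℕ | omegaDivNat n ∣ x.1}

lemma two_pow_dvd_omega : ∀ n : ℕ, 2 ≤ n → 2 ^ n ∣ omegaDivNat n
  | 0, h => by omega
  | 1, h => by omega
  | (n + 2), _ => by
    unfold omegaDivNat
    exact Finset.dvd_prod_of_mem _ (by
      simp only [Finset.mem_filter, Finset.mem_range]
      exact ⟨by omega, Nat.prime_two⟩)

lemma three_pow_dvd_omega : ∀ n : ℕ, 3 ≤ n → 3 ^ n ∣ omegaDivNat n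
  | 0, h => by omega
  | 1, h => by omega
  | (n + 2), h => by
    unfold omegaDivNat
    exact Finset.dvd_prod_of_mem _ (by
      simp only [Finset.mem_filter, Finset.mem_range]
      exact ⟨by omega, Nat.prime_three⟩)

lemma gcn_eq (x : PNatDiv) (k : ℕ) (hk : omegaDivNat k ∣ x.1)
    (hub : ∀ n, omegaDivNat n ∣ x.1 → n ≤ k) : gcn x = k := by
  unfold gcn
  exact le_antisymm (csSup_le ⟨k, hk⟩ hub) (le_csSup ⟨k, hub⟩ hk)

lemma omega_vals : omegaDivNat 2 = 4 ∧ omegaDivNat 3 = 216 ∧ omegaDivNat 4 = 1296 := by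
  refine ⟨?_, ?_, ?_⟩ <;> unfold omegaDivNat <;> decide

lemma gcn_1296 : gcn ⟨1296, by norm_num⟩ = 4 := by
  apply gcn_eq
  · rw [omega_vals.2.2]
  · intro n hn
    by_contra hlt
    push_neg at hlt
    have h2 : 2 ^ n ∣ omegaDivNat n := two_pow_dvd_omega n (by omega)
    have : (2 : ℕ) ^ 5 ∣ 1296 := dvd_trans (pow_dvd_pow 2 (by omega)) (h2.trans hn)
    norm_num at this

lemma gcn_16 : gcn ⟨16, by norm_num⟩ = 2 := by
  apply gcn_eq
  · rw [omega_vals.1]; norm_num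
  · intro n hn
    by_contra hlt
    push_neg at hlt
    have h3 : 3 ^ n ∣ omegaDivNat n := three_pow_dvd_omega n (by omega)
    have : (3 : ℕ) ∣ 16 := (dvd_pow_self 3 (by omega : n ≠ 0)).trans (h3.trans hn)
    norm_num at this

lemma gcn_81 : gcn ⟨81, by norm_num⟩ = 0 := by
  apply gcn_eq
  · simp [omegaDivNat]
  · rintro (_ | _ | n) hn
    · rfl
    · revert hn; decide
    · exfalso
      have h2 : 2 ^ (n + 2) ∣ omegaDivNat (n + 2) := two_pow_dvd_omega _ (by omega)
      exact absurd ((dvd_pow_self 2 (by omega : n + 2 ≠ 0)).trans (h2.trans hn)) (by norm_num)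

/-- in `(ℕ_div, Ω, lcm)` the generalized clique number `ω` is not an
S-functor: `Ω 0 = 1` divides both `16` and `81`, yet
`ω (lcm 16 81) = ω 1296 = 4` while `max (ω 16) (ω 81) = 2`; in particular `ω` fails to
preserve the proxy pushout of the span `16 ← Ω 0 → 81`, so no S-functor has `ω` as its
underlying map. -/
theorem gcn_not_SFunctor :
    omegaDivNat 0 = 1 ∧ Nat.lcm 16 81 = 1296 ∧
    gcn ⟨1296, by norm_num⟩ = 4 ∧
    max (gcn ⟨16, by norm_num⟩) (gcn ⟨81, by norm_num⟩) = 2 ∧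
    gcn (DivSpine.P
        (homOfLE (show omegaDivNat 0 ∣ 16 by decide) :
          DivSpine.Ω 0 ⟶ (⟨16, by norm_num⟩ : PNatDiv))
        (homOfLE (show omegaDivNat 0 ∣ 81 by decide) :
          DivSpine.Ω 0 ⟶ (⟨81, by norm_num⟩ : PNatDiv))) ≠
      max (gcn ⟨16, by norm_num⟩) (gcn ⟨81, by norm_num⟩) ∧
    ¬ ∃ F : SFunctor DivSpine, ∀ x : PNatDiv, F.val x = gcn x := by
  have h16 := gcn_16
  have h81 := gcn_81
  have h1296 := gcn_1296
  have hlcm : Nat.lcm 16 81 = 1296 := by decide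
  have hP : (DivSpine.P
        (homOfLE (show omegaDivNat 0 ∣ 16 by decide) :
          DivSpine.Ω 0 ⟶ (⟨16, by norm_num⟩ : PNatDiv))
        (homOfLE (show omegaDivNat 0 ∣ 81 by decide) :
          DivSpine.Ω 0 ⟶ (⟨81, by norm_num⟩ : PNatDiv))) = (⟨1296, by norm_num⟩ : PNatDiv) :=
    Subtype.ext hlcm
  refine ⟨rfl, hlcm, h1296, by rw [h16, h81]; rfl, ?_, ?_⟩
  · rw [hP, h1296, h16, h81]; norm_num
  · rintro ⟨F, hF⟩
    have hpp := F.pp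
        (homOfLE (show omegaDivNat 0 ∣ 16 by decide) :
          DivSpine.Ω 0 ⟶ (⟨16, by norm_num⟩ : PNatDiv))
        (homOfLE (show omegaDivNat 0 ∣ 81 by decide) :
          DivSpine.Ω 0 ⟶ (⟨81, by norm_num⟩ : PNatDiv))
    simp only [hF] at hpp
    rw [hP, h1296] at hpp
    have e1 : F.val (⟨16, by norm_num⟩ : PNatDiv) = 2 := (hF _).trans h16
    have e2 : F.val (⟨81, by norm_num⟩ : PNatDiv) = 0 := (hF _).trans h81
    exact absurd (hpp.trans (congrArg₂ max e1 e2)) (by norm_num)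
end

section
/- Let (C, Ω, 𝔓) be a spined category. Then every spine object Ω_n is pseudo-chordal, and the pseudo-chordal objects are closed under proxy pushouts: for all pseudo-chordal objects A, B and all arrows f : Ω_n → A and g : Ω_n → B, the proxy pushout object 𝔓(f, g) is pseudo-chordal. -/
open CategoryTheory

universe u v

variable {C : Type u} [Category.{v} C]

/-- in a spined category, every spine object is pseudo-chordal and the
pseudo-chordal objects are closed under proxy pushouts. -/
theorem pseudoChordal_spine_and_closed_under_proxy_pushouts
    {C : Type u} [Category.{v} C] (D : SpineData C) (hD : D.IsSpined) :
    (∀ n : ℕ, PseudoChordal D (D.Ω n)) ∧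
    (∀ {n : ℕ} {A B : C}, PseudoChordal D A → PseudoChordal D B →
      ∀ (f : D.Ω n ⟶ A) (g : D.Ω n ⟶ B), PseudoChordal D (D.P f g)) := by
  constructor
  · intro n F G
    rw [F.spine, G.spine]
  · intro n A B hA hB f g F G
    rw [F.pp, G.pp, hA F G, hB F G]
end

section
/- Let (C, Ω, 𝔓) be a measurable spined category. Then the triangulation number Δ and the chordal triangulation number Δ^ch are well-defined on all objects and define functors C → (ℕ, ≤): for every morphism f : X → Y in C, Δ[X] ≤ Δ[Y] and Δ^ch[X] ≤ Δ^ch[Y]. -/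
open CategoryTheory

universe u v

variable {C : Type u} [Category.{v} C]

lemma chordal_pseudoChordal {C : Type u} [Category.{v} C] {D : SpineData C} {H : C}
    (h : Chordal D H) : PseudoChordal D H := by
  intro F G
  induction h with
  | spine n => rw [F.spine, G.spine]
  | push a b _ _ ihA ihB => rw [F.pp, G.pp, ihA, ihB]

lemma chWidths_mem_of_hom {C : Type u} [Category.{v} C] {D : SpineData C} {X Y : C}
    (f : X ⟶ Y) {k : ℕ} (hk : k ∈ chWidths D Y) : k ∈ chWidths D X := by
  obtain ⟨H, ⟨g⟩, hc, hv⟩ := hk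
  exact ⟨H, ⟨f ≫ g⟩, hc, hv⟩

lemma pcWidths_mem_of_hom {C : Type u} [Category.{v} C] {D : SpineData C} {X Y : C}
    (f : X ⟶ Y) {k : ℕ} (hk : k ∈ pcWidths D Y) : k ∈ pcWidths D X := by
  obtain ⟨H, ⟨g⟩, hc, hv⟩ := hk
  exact ⟨H, ⟨f ≫ g⟩, hc, hv⟩

/-- in a measurable spined category, the triangulation number Δ and the
chordal triangulation number Δ^ch are well-defined on all objects (every object has a
pseudo-chordal and a chordal completion of a well-defined width) and are functorial
into `(ℕ, ≤)`: morphisms `X ⟶ Y` give `Δ[X] ≤ Δ[Y]` and `Δ^ch[X] ≤ Δ^ch[Y]`. -/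
theorem triangulation_functorial
    {C : Type u} [Category.{v} C] (D : SpineData C) (hD : D.IsSpined)
    (hmeas : Nonempty (SFunctor D)) :
    (∀ X : C, (pcWidths D X).Nonempty ∧ (chWidths D X).Nonempty) ∧
    (∀ {X Y : C}, (X ⟶ Y) → tri D X ≤ tri D Y ∧ triCh D X ≤ triCh D Y) := by
  obtain ⟨F₀⟩ := hmeas
  have key : ∀ X : C, (chWidths D X).Nonempty := by
    intro X
    obtain ⟨n, ⟨f⟩⟩ := hD.1 X
    exact ⟨n, D.Ω n, ⟨f⟩, Chordal.spine n, fun F => F.spine n⟩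
  have sub : ∀ X : C, chWidths D X ⊆ pcWidths D X := by
    rintro X k ⟨H, hf, hc, hv⟩
    exact ⟨H, hf, chordal_pseudoChordal hc, hv⟩
  refine ⟨fun X => ⟨⟨(key X).choose, sub X (key X).choose_spec⟩, key X⟩, ?_⟩
  intro X Y f
  constructor
  · exact Nat.sInf_le (pcWidths_mem_of_hom f
      (Nat.sInf_mem ⟨(key Y).choose, sub Y (key Y).choose_spec⟩))
  · exact Nat.sInf_le (chWidths_mem_of_hom f (Nat.sInf_mem (key Y)))
end

section
/- In any measurable spined category, the triangulation functor and the chordal triangulation functor coincide: Δ[X] = Δ^ch[X] for every object X. -/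
open CategoryTheory

universe u v

variable {C : Type u} [Category.{v} C]

/-- All S-functors agree on chordal objects. -/
lemma chordal_val_eq (D : SpineData C) {X : C} (h : Chordal D X)
    (F G : SFunctor D) : F.val X = G.val X := by
  induction h with
  | spine n => rw [F.spine, G.spine]
  | push a b _ _ ihA ihB => rw [F.pp, G.pp, ihA, ihB]

lemma chWidths_nonempty (D : SpineData C) (h1 : D.SC1) (X : C) :
    (chWidths D X).Nonempty := by
  obtain ⟨n, hn⟩ := h1 X
  exact ⟨n, D.Ω n, hn, Chordal.spine n, fun F => F.spine n⟩

lemma triCh_mem (D : SpineData C) (h1 : D.SC1) (X : C) :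
    triCh D X ∈ chWidths D X := Nat.sInf_mem (chWidths_nonempty D h1 X)

lemma triCh_le_of_hom (D : SpineData C) (h1 : D.SC1) {X Y : C} (f : X ⟶ Y) :
    triCh D X ≤ triCh D Y := by
  obtain ⟨H, ⟨g⟩, hc, hv⟩ := triCh_mem D h1 Y
  exact Nat.sInf_le ⟨H, ⟨f ≫ g⟩, hc, hv⟩

/-- The chordal triangulation number is itself an S-functor. -/
noncomputable def triChFunctor (D : SpineData C) (hD : D.IsSpined)
    (hmeas : Nonempty (SFunctor D)) : SFunctor D where
  val := triCh D
  mono f := triCh_le_of_hom D hD.1 f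
  spine n := by
    obtain ⟨F⟩ := hmeas
    apply le_antisymm
    · exact Nat.sInf_le ⟨D.Ω n, ⟨𝟙 _⟩, Chordal.spine n, fun F => F.spine n⟩
    · obtain ⟨H, ⟨g⟩, hc, hv⟩ := triCh_mem D hD.1 (D.Ω n)
      calc n = F.val (D.Ω n) := (F.spine n).symm
        _ ≤ F.val H := F.mono g
        _ = triCh D (D.Ω n) := hv F
  pp {n G H} g h := by
    apply le_antisymm
    · obtain ⟨A, ⟨g'⟩, hcA, hvA⟩ := triCh_mem D hD.1 G
      obtain ⟨B, ⟨h'⟩, hcB, hvB⟩ := triCh_mem D hD.1 H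
      obtain ⟨m, hm, -⟩ := hD.2 g h g' h'
      refine Nat.sInf_le ⟨D.P (g ≫ g') (h ≫ h'), ⟨m⟩,
        Chordal.push _ _ hcA hcB, fun F => ?_⟩
      rw [F.pp, hvA F, hvB F]
    · exact max_le (triCh_le_of_hom D hD.1 (D.inl g h))
        (triCh_le_of_hom D hD.1 (D.inr g h))

/-- in any measurable spined category the triangulation functor and the
chordal triangulation functor coincide. -/
theorem tri_eq_triCh
    {C : Type u} [Category.{v} C] (D : SpineData C) (hD : D.IsSpined)
    (hmeas : Nonempty (SFunctor D)) :
    ∀ X : C, tri D X = triCh D X := by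
  intro X
  apply le_antisymm
  · -- every chordal completion is a pseudo-chordal completion
    obtain ⟨H, hf, hc, hv⟩ := triCh_mem D hD.1 X
    exact Nat.sInf_le ⟨H, hf, fun F G => chordal_val_eq D hc F G, hv⟩
  · -- a minimum-width pseudo-chordal completion yields a chordal one of the same width
    have hne : (pcWidths D X).Nonempty := by
      obtain ⟨k, H, hf, hc, hv⟩ := chWidths_nonempty D hD.1 X
      exact ⟨k, H, hf, fun F G => chordal_val_eq D hc F G, hv⟩
    obtain ⟨H, ⟨f⟩, hpc, hv⟩ := Nat.sInf_mem hne
    calc triCh D X ≤ triCh D H := triCh_le_of_hom D hD.1 f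
      _ = tri D X := hv (triChFunctor D hD hmeas)
end

section
/- Let (C, Ω, 𝔓) be a spined category, S a set, and f : S → Ob(C) a function such that (i) for every n ∈ ℕ there exists X ∈ S with f(X) = Ω_n, and (ii) for every span f(X) ←x— Ω_n —y→ f(Y) in C with X, Y ∈ S there is a distinguished element Z_{x,y} ∈ S with f(Z_{x,y}) = 𝔓(x, y). Let S_↓f be the category with object set S and hom-sets Hom_{S_↓f}(A, B) := Hom_C(f(A), f(B)) (with composition inherited from C). Then there exist a spine Ω^S (choosing for each n some element of f⁻¹(Ω_n)) and a proxy pushout operation 𝔓^S (assigning to each span X ←x— Ω^S_n —y→ Y the object Z_{x,y} with the structure maps of 𝔓(x,y)) such that: (S_↓f, Ω^S, 𝔓^S) is a spined category; f, viewed as the evident functor S_↓f → C, is a spinal functor; and if (C, Ω, 𝔓) is measurable then so is (S_↓f, Ω^S, 𝔓^S). -/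
open CategoryTheory

universe u v

variable {C : Type u} [Category.{v} C]

universe w

/-- The `S`-category `S_↓f` induced by a function `f : S → C`: objects are the elements
of `S`, and `Hom(A, B) := Hom_C (f A, f B)`. -/
def Ind {C : Type u} [Category.{v} C] {S : Type w} (f : S → C) : Type w := S

instance {C : Type u} [Category.{v} C] {S : Type w} (f : S → C) : Category.{v} (Ind f) where
  Hom A B := f A ⟶ f B
  id A := 𝟙 (f A)
  comp g h := g ≫ h

/-- The evident (faithful, injective-on-objects) functor `S_↓f → C`. -/
def indFunctor {C : Type u} [Category.{v} C] {S : Type w} (f : S → C) : Ind f ⥤ C where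
  obj A := f A
  map φ := φ


section IndAux

variable {C : Type u} [Category.{v} C] {S : Type w} {f : S → C}

@[simp] lemma Ind.comp_eq {A B X : Ind f} (g : A ⟶ B) (h : B ⟶ X) :
    g ≫ h = ((g ≫ h : f A ⟶ f X) : A ⟶ X) := rfl

@[simp] lemma indFunctor_map' {A B : Ind f} (g : A ⟶ B) : (indFunctor f).map g = g := rfl

end IndAux


lemma SpineData.SC2' {C : Type u} [Category.{v} C] (D : SpineData C) (hsc : D.SC2)
    {n : ℕ} {G H G' H' : C} (g : D.Ω n ⟶ G) (h : D.Ω n ⟶ H) (g' : G ⟶ G') (h' : H ⟶ H')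
    (a : D.Ω n ⟶ G') (b : D.Ω n ⟶ H') (ha : g ≫ g' = a) (hb : h ≫ h' = b) :
    ∃! m : D.P g h ⟶ D.P a b,
      D.inl g h ≫ m = g' ≫ D.inl a b ∧ D.inr g h ≫ m = h' ≫ D.inr a b := by
  subst ha; subst hb; exact hsc g h g' h'

lemma ind_aux1 {C : Type u} [Category.{v} C] {X Y Z W V : C} (i : X ⟶ Y) (p : Y = Z)
    (q : Z = Y) (m : Y ⟶ W) (r : W = V) (rhs : X ⟶ V) (h : i ≫ m ≫ eqToHom r = rhs) :
    (i ≫ eqToHom p) ≫ eqToHom q ≫ m ≫ eqToHom r = rhs := by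
  subst p; simpa using h

lemma ind_aux2 {C : Type u} [Category.{v} C] {X Y Z W U V : C} (i : X ⟶ Y) (p : Y = Z)
    (m' : Z ⟶ W) (e : W = V) (g' : X ⟶ U) (j : U ⟶ V) (q : V = W)
    (h : (i ≫ eqToHom p) ≫ m' = g' ≫ j ≫ eqToHom q) :
    i ≫ eqToHom p ≫ m' ≫ eqToHom e = g' ≫ j := by
  subst e; simpa using h

lemma ind_aux3 {C : Type u} [Category.{v} C] {X Y Z : C} (i : X ⟶ Y) (p : Y = Z) (q : Z = Y) :
    (i ≫ eqToHom p) ≫ eqToHom q = i := by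
  simp

/-- if `f : S → C` is surjective on the spine of a spined category
`(C, Ω, 𝔓)` and the proxy pushout object of every span between objects in the image of
`f` has a distinguished preimage under `f`, then `S_↓f` carries spine data `(Ω^S, 𝔓^S)`
(with `f (Ω^S n) = Ω n` and `𝔓^S` the distinguished preimages of the proxy pushouts,
with the corresponding structure maps) making it a spined category, such that the
evident functor `S_↓f → C` is a spinal functor; moreover if `(C, Ω, 𝔓)` is measurable
then so is `(S_↓f, Ω^S, 𝔓^S)`. -/
theorem induced_spined_category {C : Type u} [Category.{v} C] (D : SpineData C)
    (hD : D.IsSpined) {S : Type w} (f : S → C)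
    (hsurj : ∀ n : ℕ, ∃ X : S, f X = D.Ω n)
    (hpre : ∀ (n : ℕ) (X Y : S) (x : D.Ω n ⟶ f X) (y : D.Ω n ⟶ f Y),
      ∃ Z : S, f Z = D.P x y) :
    ∃ (Ds : SpineData (Ind f)) (e : ∀ n : ℕ, f (Ds.Ω n) = D.Ω n),
      Ds.IsSpined ∧
      (∀ (n : ℕ) (X Y : Ind f) (x : Ds.Ω n ⟶ X) (y : Ds.Ω n ⟶ Y),
        ∃ ep : f (Ds.P x y) =
            D.P (eqToHom (e n).symm ≫ (indFunctor f).map x)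
                (eqToHom (e n).symm ≫ (indFunctor f).map y),
          (indFunctor f).map (Ds.inl x y) ≫ eqToHom ep =
            D.inl (eqToHom (e n).symm ≫ (indFunctor f).map x)
                  (eqToHom (e n).symm ≫ (indFunctor f).map y) ∧
          (indFunctor f).map (Ds.inr x y) ≫ eqToHom ep =
            D.inr (eqToHom (e n).symm ≫ (indFunctor f).map x)
                  (eqToHom (e n).symm ≫ (indFunctor f).map y)) ∧
      (Nonempty (SFunctor D) → Nonempty (SFunctor Ds)) := by
  classical
  obtain ⟨hSC1, hSC2⟩ := hD
  choose Ωs eΩ using hsurj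
  choose Ps ePs using hpre
  refine ⟨⟨Ωs,
    fun {n X Y} x y => Ps n X Y (eqToHom (eΩ n).symm ≫ x) (eqToHom (eΩ n).symm ≫ y),
    fun {n X Y} x y => show f X ⟶ f (Ps n X Y _ _) from
      D.inl _ _ ≫ eqToHom (ePs n X Y _ _).symm,
    fun {n X Y} x y => show f Y ⟶ f (Ps n X Y _ _) from
      D.inr _ _ ≫ eqToHom (ePs n X Y _ _).symm⟩, eΩ, ⟨?_, ?_⟩, ?_, ?_⟩
  · -- SC1
    intro X
    obtain ⟨n, ⟨φ⟩⟩ := hSC1 (f X)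
    exact ⟨n, ⟨show f X ⟶ f (Ωs n) from φ ≫ eqToHom (eΩ n).symm⟩⟩
  · -- SC2
    intro n G H G' H' g h g' h'
    simp only [Ind.comp_eq]
    obtain ⟨m, ⟨hm1, hm2⟩, hu⟩ := D.SC2' hSC2 (eqToHom (eΩ n).symm ≫ g) (eqToHom (eΩ n).symm ≫ h)
      g' h' (eqToHom (eΩ n).symm ≫ ((g : f (Ωs n) ⟶ f G) ≫ g'))
      (eqToHom (eΩ n).symm ≫ ((h : f (Ωs n) ⟶ f H) ≫ h'))
      (Category.assoc _ _ _) (Category.assoc _ _ _)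
    have e1 := ePs n G H (eqToHom (eΩ n).symm ≫ g) (eqToHom (eΩ n).symm ≫ h)
    have e2 := ePs n G' H' (eqToHom (eΩ n).symm ≫ ((g : f (Ωs n) ⟶ f G) ≫ g'))
      (eqToHom (eΩ n).symm ≫ ((h : f (Ωs n) ⟶ f H) ≫ h'))
    have hm1' := reassoc_of% hm1
    have hm2' := reassoc_of% hm2
    refine ⟨show f (Ps n G H (eqToHom (eΩ n).symm ≫ g) (eqToHom (eΩ n).symm ≫ h)) ⟶
      f (Ps n G' H' (eqToHom (eΩ n).symm ≫ ((g : f (Ωs n) ⟶ f G) ≫ g'))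
        (eqToHom (eΩ n).symm ≫ ((h : f (Ωs n) ⟶ f H) ≫ h'))) from
      eqToHom e1 ≫ m ≫ eqToHom e2.symm, ⟨?_, ?_⟩, ?_⟩
    · exact ind_aux1 _ _ _ _ _ _ (hm1' _)
    · exact ind_aux1 _ _ _ _ _ _ (hm2' _)
    · rintro m' ⟨hm1'', hm2''⟩
      have key : eqToHom e1.symm ≫ (m' : f (Ps n G H _ _) ⟶ f (Ps n G' H' _ _)) ≫ eqToHom e2
          = m := by
        apply hu
        constructor
        · exact ind_aux2 _ _ _ _ _ _ _ hm1''
        · exact ind_aux2 _ _ _ _ _ _ _ hm2''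
      calc (m' : f (Ps n G H _ _) ⟶ f (Ps n G' H' _ _))
          = eqToHom e1 ≫ (eqToHom e1.symm ≫ m' ≫ eqToHom e2) ≫ eqToHom e2.symm := by simp
        _ = eqToHom e1 ≫ m ≫ eqToHom e2.symm := by rw [key]
  · -- pp preservation
    intro n X Y x y
    refine ⟨ePs n X Y _ _, ?_, ?_⟩ <;> exact ind_aux3 _ _ _
  · -- measurability
    rintro ⟨F⟩
    refine ⟨⟨fun X => F.val (f X), fun {X Y} φ => F.mono φ, fun n => by
      show F.val (f (Ωs n)) = n
      rw [eΩ n, F.spine], fun {n G H} g h => ?_⟩⟩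
    show F.val (f (Ps n G H _ _)) = _
    exact (congrArg F.val (ePs n G H _ _)).trans (F.pp _ _)
end
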